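/- Let p be a prime, d ≥ 1, N ≥ 2 integers, and let χ_1,…,χ_d be p-adic characters with Taylor coefficients c_{i,l} = χ_i^{((l))}(1) ∈ ℤ_p at 1. Every integer n > 0 is uniquely n = p^v(pq+r) with v, q ≥ 0 and r ∈ {1,…,p−1}. Then in ℚ_p: ∑_{0<n_1<⋯<n_d<N} ∏_{i=1}^d χ_i(n_i/N) = ∑ over all tuples (v_i, q_i, r_i)_{i=1,…,d} ∈ (ℕ × ℕ × {1,…,p−1})^d satisfying 0 < p^{v_1}(pq_1+r_1) < ⋯ < p^{v_d}(pq_d+r_d) < N, of ∑_{l_1,…,l_d ≥ 0} ∏_{i=1}^d χ_i(p^{v_i}/N) · χ_i(r_i) · r_i^{−l_i} · c_{i,l_i} · (p·q_i)^{l_i}, the whole family being summable in ℚ_p. -/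

import Mathlib

open Finset

/-- The finite set of strictly increasing chains `0 < n_1 < ⋯ < n_d < N` of natural numbers. -/
def chainsN (d N : ℕ) : Finset (Fin d → ℕ) :=
  (Fintype.piFinset fun _ : Fin d => Finset.Ioo 0 N).filter
    (fun n => ∀ i j : Fin d, i < j → n i < n j)

section MhsAux

variable {p : ℕ} [hp : Fact p.Prime]

lemma my_norm_natCast_le_one (n : ℕ) : ‖(n : ℚ_[p])‖ ≤ 1 := by
  simpa using Padic.norm_int_le_one (p := p) (n : ℤ)

lemma my_norm_r_eq_one {r : ℕ} (h1 : 1 ≤ r) (h2 : r ≤ p - 1) : ‖(r : ℚ_[p])‖ = 1 := by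
  have hp2 := hp.out.two_le
  have hle : ‖(r : ℚ_[p])‖ ≤ 1 := my_norm_natCast_le_one r
  rcases lt_or_eq_of_le hle with h | h
  · exfalso
    have hd : (p : ℤ) ∣ (r : ℤ) :=
      (PadicInt.norm_int_lt_one_iff_dvd (p := p) (r : ℤ)).mp (by rw [PadicInt.norm_def]; simpa using h)
    have hd' : p ∣ r := Int.ofNat_dvd.mp (by exact_mod_cast hd)
    have := Nat.le_of_dvd (by omega) hd'
    omega
  · exact h

lemma my_not_dvd_aux {q r : ℕ} (hr1 : 1 ≤ r) (hr2 : r ≤ p - 1) : ¬ p ∣ (p * q + r) := by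
  intro h
  have hpr : p ∣ r := (Nat.dvd_add_right ⟨q, rfl⟩).mp h
  have := Nat.le_of_dvd (by omega) hpr
  have := hp.out.two_le
  omega

lemma my_decomp_unique {v q r v' q' r' : ℕ} (hr1 : 1 ≤ r) (hr2 : r ≤ p - 1)
    (hr1' : 1 ≤ r') (hr2' : r' ≤ p - 1)
    (h : p ^ v * (p * q + r) = p ^ v' * (p * q' + r')) : v = v' ∧ q = q' ∧ r = r' := by
  have hp2 := hp.out.two_le
  have hpow : ∀ k : ℕ, 0 < p ^ k := fun k => Nat.pow_pos (n := k) (by omega)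
  have key : ∀ v v' q q' r r', 1 ≤ r → r ≤ p - 1 → 1 ≤ r' → r' ≤ p - 1 →
      p ^ v * (p * q + r) = p ^ v' * (p * q' + r') → v < v' → False := by
    intro v v' q q' r r' a1 a2 a3 a4 heq hlt
    have h1 : p ^ v * (p * q + r) = p ^ v * (p ^ (v' - v) * (p * q' + r')) := by
      rw [heq, ← mul_assoc, ← pow_add]
      congr 2
      omega
    have h2 : p * q + r = p ^ (v' - v) * (p * q' + r') :=
      Nat.eq_of_mul_eq_mul_left (hpow v) h1
    have h3 : p ∣ p * q + r := by
      rw [h2]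
      exact Dvd.dvd.mul_right (dvd_pow_self p (by omega)) _
    exact my_not_dvd_aux a1 a2 h3
  have hv : v = v' := by
    rcases lt_trichotomy v v' with hlt | he | hgt
    · exact absurd (key v v' q q' r r' hr1 hr2 hr1' hr2' h hlt) (by simp)
    · exact he
    · exact absurd (key v' v q' q r' r hr1' hr2' hr1 hr2 h.symm hgt) (by simp)
  subst hv
  have h2 : p * q + r = p * q' + r' := Nat.eq_of_mul_eq_mul_left (hpow v) h
  have hrmod : ∀ r : ℕ, r ≤ p - 1 → ∀ q : ℕ, (p * q + r) % p = r := by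
    intro r hr q
    rw [add_comm, mul_comm, Nat.add_mul_mod_self_right]
    exact Nat.mod_eq_of_lt (by omega)
  have hrr : r = r' := by
    have := congrArg (· % p) h2
    simpa [hrmod r hr2, hrmod r' hr2'] using this
  subst hrr
  refine ⟨rfl, ?_, rfl⟩
  have : p * q = p * q' := by omega
  exact Nat.eq_of_mul_eq_mul_left (by omega) this

lemma my_decomp_spec {n : ℕ} (hn : 0 < n) :
    1 ≤ (n / p ^ (n.factorization p)) % p ∧ (n / p ^ (n.factorization p)) % p ≤ p - 1 ∧
      p ^ (n.factorization p) *
        (p * ((n / p ^ (n.factorization p)) / p) + (n / p ^ (n.factorization p)) % p) = n := by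
  have hp2 := hp.out.two_le
  have hnd : ¬ p ∣ (n / p ^ (n.factorization p)) := Nat.not_dvd_ordCompl hp.out hn.ne'
  have hmod : (n / p ^ (n.factorization p)) % p ≠ 0 := fun h => hnd (Nat.dvd_of_mod_eq_zero h)
  have hlt : (n / p ^ (n.factorization p)) % p < p := Nat.mod_lt _ (by omega)
  refine ⟨by omega, by omega, ?_⟩
  rw [Nat.div_add_mod]
  exact Nat.ordProj_mul_ordCompl_eq_self n p

lemma my_hasSum_pi_prod (d : ℕ) : ∀ (f : Fin d → ℕ → ℚ_[p]) (a : Fin d → ℚ_[p]),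
    (∀ i, HasSum (f i) (a i)) → (∀ i, Summable fun l => ‖f i l‖) →
    HasSum (fun l : Fin d → ℕ => ∏ i, f i (l i)) (∏ i, a i) ∧
      Summable (fun l : Fin d → ℕ => ‖∏ i, f i (l i)‖) := by
  induction d with
  | zero =>
    intro f a _ _
    constructor
    · have h := hasSum_single (f := fun _ : Fin 0 → ℕ => ∏ i : Fin 0, f i 0)
        (fun _ : Fin 0 => (0 : ℕ)) (fun b hb => absurd (Subsingleton.elim b _) hb)
      simpa using h
    · have h : (fun l : Fin 0 → ℕ => ‖∏ i, f i (l i)‖) = fun _ => ‖(1 : ℚ_[p])‖ := by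
        funext l; simp
      rw [h]
      exact summable_of_finite_support (Set.Finite.subset (Set.finite_univ) (by simp))
  | succ d IH =>
    intro f a hf hn
    obtain ⟨ih1, ih2⟩ := IH (fun i => f i.succ) (fun i => a i.succ)
      (fun i => hf i.succ) (fun i => hn i.succ)
    let e : (ℕ × (Fin d → ℕ)) ≃ (Fin (d + 1) → ℕ) := Fin.consEquiv fun _ => ℕ
    have hcomp : ∀ x : ℕ × (Fin d → ℕ),
        (∏ i, f i (e x i)) = f 0 x.1 * ∏ i : Fin d, f i.succ (x.2 i) := by
      intro x
      rw [Fin.prod_univ_succ]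
      simp [e, Fin.consEquiv]
    have hsum2 : Summable fun x : ℕ × (Fin d → ℕ) =>
        f 0 x.1 * ∏ i : Fin d, f i.succ (x.2 i) :=
      summable_mul_of_summable_norm (f := f 0)
        (g := fun l : Fin d → ℕ => ∏ i : Fin d, f i.succ (l i)) (hn 0) ih2
    have hs : HasSum (fun x : ℕ × (Fin d → ℕ) => f 0 x.1 * ∏ i : Fin d, f i.succ (x.2 i))
        (a 0 * ∏ i : Fin d, a i.succ) :=
      HasSum.mul (f := f 0) (g := fun l : Fin d → ℕ => ∏ i : Fin d, f i.succ (l i))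
        (hf 0) ih1 hsum2
    have hnorm : Summable fun x : ℕ × (Fin d → ℕ) =>
        ‖f 0 x.1 * ∏ i : Fin d, f i.succ (x.2 i)‖ :=
      Summable.mul_norm (f := f 0)
        (g := fun l : Fin d → ℕ => ∏ i : Fin d, f i.succ (l i)) (hn 0) ih2
    constructor
    · rw [Fin.prod_univ_succ]
      rw [← e.hasSum_iff]
      have hFe : ((fun l : Fin (d + 1) → ℕ => ∏ i, f i (l i)) ∘ e) =
          fun x : ℕ × (Fin d → ℕ) => f 0 x.1 * ∏ i : Fin d, f i.succ (x.2 i) :=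
        funext fun x => hcomp x
      rw [hFe]
      exact hs
    · rw [← e.summable_iff]
      have hFe : ((fun l : Fin (d + 1) → ℕ => ‖∏ i, f i (l i)‖) ∘ e) =
          fun x : ℕ × (Fin d → ℕ) => ‖f 0 x.1 * ∏ i : Fin d, f i.succ (x.2 i)‖ :=
        funext fun x => by simp only [Function.comp_apply, hcomp]
      rw [hFe]
      exact hnorm

lemma my_key_hasSum (N : ℕ) (hN : 2 ≤ N) (χ : ℚ_[p] → ℚ_[p]) (c : ℕ → ℤ_[p])
    (hmul : ∀ x y : ℚ_[p], x ≠ 0 → y ≠ 0 → χ (x * y) = χ x * χ y)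
    (htaylor : ∀ x : ℚ_[p], ‖x‖ ≤ (p : ℝ)⁻¹ →
      HasSum (fun l : ℕ => (c l : ℚ_[p]) * x ^ l) (χ (1 + x)))
    (v q r : ℕ) (hr1 : 1 ≤ r) (hr2 : r ≤ p - 1) :
    HasSum (fun l : ℕ => χ ((p : ℚ_[p]) ^ v / (N : ℚ_[p])) * χ (r : ℚ_[p]) *
        (r : ℚ_[p]) ^ (-(l : ℤ)) * (c l : ℚ_[p]) * ((p * q : ℕ) : ℚ_[p]) ^ l)
      (χ (((p ^ v * (p * q + r) : ℕ) : ℚ_[p]) / (N : ℚ_[p]))) ∧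
    Summable (fun l : ℕ => ‖χ ((p : ℚ_[p]) ^ v / (N : ℚ_[p])) * χ (r : ℚ_[p]) *
        (r : ℚ_[p]) ^ (-(l : ℤ)) * (c l : ℚ_[p]) * ((p * q : ℕ) : ℚ_[p]) ^ l‖) := by
  have hp2 := hp.out.two_le
  have hrnorm : ‖(r : ℚ_[p])‖ = 1 := my_norm_r_eq_one hr1 hr2
  have hr0 : (r : ℚ_[p]) ≠ 0 := by
    intro h; rw [h] at hrnorm; simp at hrnorm
  set x : ℚ_[p] := ((p * q : ℕ) : ℚ_[p]) / (r : ℚ_[p]) with hxdef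
  have hpq : ‖((p * q : ℕ) : ℚ_[p])‖ ≤ (p : ℝ)⁻¹ := by
    push_cast
    rw [norm_mul, Padic.norm_p]
    calc ((p : ℝ))⁻¹ * ‖(q : ℚ_[p])‖ ≤ (p : ℝ)⁻¹ * 1 := by
          apply mul_le_mul_of_nonneg_left (my_norm_natCast_le_one q)
          positivity
      _ = (p : ℝ)⁻¹ := mul_one _
  have hx : ‖x‖ ≤ (p : ℝ)⁻¹ := by
    rw [hxdef, norm_div, hrnorm, div_one]
    exact hpq
  have hts := htaylor x hx
  have hp1 : (1 : ℝ) < (p : ℝ) := by exact_mod_cast hp2.trans_lt' one_lt_two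
  have hpinv1 : (p : ℝ)⁻¹ < 1 := by
    rw [inv_lt_one_iff₀]; right; exact hp1
  have h1x : (1 : ℚ_[p]) + x ≠ 0 := by
    intro h
    have hxe : x = -1 := by
      have := eq_neg_of_add_eq_zero_right h
      simpa using this
    rw [hxe] at hx
    simp at hx
    linarith
  have hNe : (N : ℚ_[p]) ≠ 0 := Nat.cast_ne_zero.mpr (by omega)
  have hpe : ((p : ℚ_[p])) ≠ 0 := Nat.cast_ne_zero.mpr (by omega)
  have hA : (p : ℚ_[p]) ^ v / (N : ℚ_[p]) ≠ 0 := div_ne_zero (pow_ne_zero _ hpe) hNe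
  have hm0 : ((p * q + r : ℕ) : ℚ_[p]) ≠ 0 := Nat.cast_ne_zero.mpr (by omega)
  have hmx : ((p * q + r : ℕ) : ℚ_[p]) = (r : ℚ_[p]) * (1 + x) := by
    rw [hxdef]
    field_simp
    push_cast
    ring
  have htarget : χ (((p ^ v * (p * q + r) : ℕ) : ℚ_[p]) / (N : ℚ_[p]))
      = χ ((p : ℚ_[p]) ^ v / (N : ℚ_[p])) * χ (r : ℚ_[p]) * χ (1 + x) := by
    have hcast : (((p ^ v * (p * q + r) : ℕ) : ℚ_[p]) / (N : ℚ_[p]))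
        = ((p : ℚ_[p]) ^ v / (N : ℚ_[p])) * ((p * q + r : ℕ) : ℚ_[p]) := by
      push_cast; ring
    rw [hcast, hmx, hmul _ _ hA (mul_ne_zero hr0 h1x), hmul _ _ hr0 h1x, mul_assoc]
  have hterm : (fun l : ℕ => χ ((p : ℚ_[p]) ^ v / (N : ℚ_[p])) * χ (r : ℚ_[p]) *
      (r : ℚ_[p]) ^ (-(l : ℤ)) * (c l : ℚ_[p]) * ((p * q : ℕ) : ℚ_[p]) ^ l)
      = fun l : ℕ => (χ ((p : ℚ_[p]) ^ v / (N : ℚ_[p])) * χ (r : ℚ_[p])) *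
        ((c l : ℚ_[p]) * x ^ l) := by
    funext l
    rw [hxdef, div_pow, zpow_neg, zpow_natCast]
    field_simp
  have h2 := hts.mul_left (χ ((p : ℚ_[p]) ^ v / (N : ℚ_[p])) * χ (r : ℚ_[p]))
  constructor
  · rw [hterm, htarget]
    exact h2
  · have hterm' := fun l => congrFun hterm l
    simp only [hterm']
    refine Summable.of_nonneg_of_le (fun _ => norm_nonneg _) (fun l => ?_)
      (((summable_geometric_of_lt_one (by positivity) hpinv1).mul_left
        (‖χ ((p : ℚ_[p]) ^ v / (N : ℚ_[p])) * χ (r : ℚ_[p])‖)))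
    have hb : ‖(c l : ℚ_[p]) * x ^ l‖ ≤ ((p : ℝ)⁻¹) ^ l := by
      rw [norm_mul, norm_pow]
      calc ‖(c l : ℚ_[p])‖ * ‖x‖ ^ l ≤ 1 * ((p : ℝ)⁻¹) ^ l := by
            gcongr
            · rw [PadicInt.padic_norm_e_of_padicInt]
              exact PadicInt.norm_le_one _
        _ = ((p : ℝ)⁻¹) ^ l := one_mul _
    rw [norm_mul]
    exact mul_le_mul_of_nonneg_left hb (norm_nonneg _)

end MhsAux

/-- The chain condition on `(v, q, r)` triples. -/
def myP (p N d : ℕ) (s : (Fin d → ℕ) × (Fin d → ℕ) × (Fin d → ℕ)) : Prop :=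
  (∀ i, 1 ≤ s.2.2 i ∧ s.2.2 i ≤ p - 1) ∧
    (∀ i, 0 < p ^ (s.1 i) * (p * s.2.1 i + s.2.2 i)) ∧
    (∀ i j : Fin d, i < j →
      p ^ (s.1 i) * (p * s.2.1 i + s.2.2 i) < p ^ (s.1 j) * (p * s.2.1 j + s.2.2 j)) ∧
    (∀ i, p ^ (s.1 i) * (p * s.2.1 i + s.2.2 i) < N)

/-- Reconstruction of the chain from a `(v, q, r)` triple. -/
def mynmap (p d : ℕ) (s : (Fin d → ℕ) × (Fin d → ℕ) × (Fin d → ℕ)) : Fin d → ℕ :=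
  fun i => p ^ (s.1 i) * (p * s.2.1 i + s.2.2 i)

/-- The summand over `((v, q, r), l)`. -/
noncomputable def myG (p : ℕ) [Fact p.Prime] (N d : ℕ) (χ : Fin d → ℚ_[p] → ℚ_[p]) (c : Fin d → ℕ → ℤ_[p])
    (s : (Fin d → ℕ) × (Fin d → ℕ) × (Fin d → ℕ)) (l : Fin d → ℕ) : ℚ_[p] :=
  ∏ i, χ i ((p : ℚ_[p]) ^ (s.1 i) / (N : ℚ_[p])) * χ i ((s.2.2 i : ℚ_[p])) *
    ((s.2.2 i : ℚ_[p])) ^ (-(l i : ℤ)) * (c i (l i) : ℚ_[p]) *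
    ((p * s.2.1 i : ℕ) : ℚ_[p]) ^ (l i)

/-- Reassociating equivalence of quadruples. -/
def myEquiv (A B C D : Type*) : ((A × B × C) × D) ≃ (A × B × C × D) where
  toFun x := (x.1.1, x.1.2.1, x.1.2.2, x.2)
  invFun t := ((t.1, t.2.1, t.2.2.1), t.2.2.2)
  left_inv x := rfl
  right_inv t := rfl

theorem my_core (p : ℕ) [hp : Fact p.Prime] (d N : ℕ) (hN : 2 ≤ N)
    (χ : Fin d → ℚ_[p] → ℚ_[p]) (c : Fin d → ℕ → ℤ_[p])
    (hmul : ∀ i : Fin d, ∀ x y : ℚ_[p], x ≠ 0 → y ≠ 0 → χ i (x * y) = χ i x * χ i y)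
    (htaylor : ∀ i : Fin d, ∀ x : ℚ_[p], ‖x‖ ≤ (p : ℝ)⁻¹ →
      HasSum (fun l : ℕ => (c i l : ℚ_[p]) * x ^ l) (χ i (1 + x))) :
    HasSum (fun t : (Fin d → ℕ) × (Fin d → ℕ) × (Fin d → ℕ) × (Fin d → ℕ) =>
        if (∀ i, 1 ≤ t.2.2.1 i ∧ t.2.2.1 i ≤ p - 1) ∧
            (∀ i, 0 < p ^ (t.1 i) * (p * t.2.1 i + t.2.2.1 i)) ∧
            (∀ i j : Fin d, i < j →
              p ^ (t.1 i) * (p * t.2.1 i + t.2.2.1 i) <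
                p ^ (t.1 j) * (p * t.2.1 j + t.2.2.1 j)) ∧
            (∀ i, p ^ (t.1 i) * (p * t.2.1 i + t.2.2.1 i) < N) then
          ∏ i, χ i ((p : ℚ_[p]) ^ (t.1 i) / (N : ℚ_[p])) * χ i ((t.2.2.1 i : ℚ_[p])) *
            ((t.2.2.1 i : ℚ_[p])) ^ (-(t.2.2.2 i : ℤ)) * (c i (t.2.2.2 i) : ℚ_[p]) *
            ((p * t.2.1 i : ℕ) : ℚ_[p]) ^ (t.2.2.2 i)
        else 0)
      (∑ n ∈ chainsN d N, ∏ i, χ i ((n i : ℚ_[p]) / (N : ℚ_[p]))) := by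
  classical
  have hp2 := hp.out.two_le
  -- the key `HasSum` over `l` for a fixed admissible triple
  have hkey : ∀ s : (Fin d → ℕ) × (Fin d → ℕ) × (Fin d → ℕ), myP p N d s →
      HasSum (myG p N d χ c s)
        (∏ i, χ i ((mynmap p d s i : ℚ_[p]) / (N : ℚ_[p]))) := by
    intro s hs
    obtain ⟨h1, _, _, _⟩ := hs
    exact (my_hasSum_pi_prod d
      (fun i l => χ i ((p : ℚ_[p]) ^ (s.1 i) / (N : ℚ_[p])) * χ i ((s.2.2 i : ℚ_[p])) *
        ((s.2.2 i : ℚ_[p])) ^ (-(l : ℤ)) * (c i l : ℚ_[p]) *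
        ((p * s.2.1 i : ℕ) : ℚ_[p]) ^ l)
      (fun i => χ i (((p ^ s.1 i * (p * s.2.1 i + s.2.2 i) : ℕ) : ℚ_[p]) / (N : ℚ_[p])))
      (fun i => (my_key_hasSum N hN (χ i) (c i) (hmul i) (htaylor i) _ _ _
        (h1 i).1 (h1 i).2).1)
      (fun i => (my_key_hasSum N hN (χ i) (c i) (hmul i) (htaylor i) _ _ _
        (h1 i).1 (h1 i).2).2)).1
  -- the finite set of admissible triples
  set A : Finset ((Fin d → ℕ) × (Fin d → ℕ) × (Fin d → ℕ)) :=
    ((Fintype.piFinset fun _ : Fin d => Finset.range N) ×ˢ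
      (Fintype.piFinset fun _ : Fin d => Finset.range N) ×ˢ
      (Fintype.piFinset fun _ : Fin d => Finset.range N)).filter (myP p N d) with hA
  have hmemA : ∀ s, s ∈ A ↔ myP p N d s := by
    intro s
    rw [hA, Finset.mem_filter]
    constructor
    · exact fun h => h.2
    · intro h
      refine ⟨?_, h⟩
      obtain ⟨h1, h2, h3, h4⟩ := h
      simp only [Finset.mem_product, Fintype.mem_piFinset, Finset.mem_range]
      refine ⟨fun i => ?_, fun i => ?_, fun i => ?_⟩
      · have hle : p ^ s.1 i ≤ p ^ s.1 i * (p * s.2.1 i + s.2.2 i) :=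
          Nat.le_mul_of_pos_right _ (by have := (h1 i).1; omega)
        have h5 : s.1 i < 2 ^ s.1 i := Nat.lt_two_pow_self (n := s.1 i)
        have h6 : 2 ^ s.1 i ≤ p ^ s.1 i := Nat.pow_le_pow_left hp2 _
        have := h4 i
        omega
      · have hb : p * s.2.1 i ≤ p ^ s.1 i * (p * s.2.1 i + s.2.2 i) :=
          le_trans (Nat.le_add_right _ _)
            (Nat.le_mul_of_pos_left _ (Nat.pow_pos (by omega)))
        have hqb : s.2.1 i ≤ p * s.2.1 i := Nat.le_mul_of_pos_left _ (by omega)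
        have := h4 i
        omega
      · have hb : s.2.2 i ≤ p ^ s.1 i * (p * s.2.1 i + s.2.2 i) :=
          le_trans (Nat.le_add_left _ _)
            (Nat.le_mul_of_pos_left _ (Nat.pow_pos (by omega)))
        have := h4 i
        omega
  -- `HasSum` for each admissible triple, over the product index set
  have hHs : ∀ s ∈ A,
      HasSum (fun x : ((Fin d → ℕ) × (Fin d → ℕ) × (Fin d → ℕ)) × (Fin d → ℕ) =>
        if x.1 = s then myG p N d χ c s x.2 else 0)
      (∏ i, χ i ((mynmap p d s i : ℚ_[p]) / (N : ℚ_[p]))) := by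
    intro s hs
    have hPs := (hmemA s).mp hs
    have hGs := hkey s hPs
    have hinj : Function.Injective (fun l : Fin d → ℕ => (s, l)) := by
      intro a b h
      simpa using congrArg Prod.snd h
    refine (Function.Injective.hasSum_iff hinj ?_).mp ?_
    · intro x hx
      rw [if_neg]
      intro h
      exact hx ⟨x.2, Prod.ext h.symm rfl⟩
    · have hco : ((fun x : ((Fin d → ℕ) × (Fin d → ℕ) × (Fin d → ℕ)) × (Fin d → ℕ) =>
          if x.1 = s then myG p N d χ c s x.2 else 0) ∘ (fun l : Fin d → ℕ => (s, l)))
          = myG p N d χ c s := by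
        funext l; simp
      rw [hco]
      exact hGs
  have hsum : HasSum (fun x : ((Fin d → ℕ) × (Fin d → ℕ) × (Fin d → ℕ)) × (Fin d → ℕ) =>
      ∑ s ∈ A, if x.1 = s then myG p N d χ c s x.2 else 0)
      (∑ s ∈ A, ∏ i, χ i ((mynmap p d s i : ℚ_[p]) / (N : ℚ_[p]))) := hasSum_sum hHs
  -- identify the composed function
  set e : (((Fin d → ℕ) × (Fin d → ℕ) × (Fin d → ℕ)) × (Fin d → ℕ)) ≃
      ((Fin d → ℕ) × (Fin d → ℕ) × (Fin d → ℕ) × (Fin d → ℕ)) :=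
    myEquiv (Fin d → ℕ) (Fin d → ℕ) (Fin d → ℕ) (Fin d → ℕ) with he
  rw [← e.hasSum_iff]
  have hFe : ((fun t : (Fin d → ℕ) × (Fin d → ℕ) × (Fin d → ℕ) × (Fin d → ℕ) =>
      if (∀ i, 1 ≤ t.2.2.1 i ∧ t.2.2.1 i ≤ p - 1) ∧
          (∀ i, 0 < p ^ (t.1 i) * (p * t.2.1 i + t.2.2.1 i)) ∧
          (∀ i j : Fin d, i < j →
            p ^ (t.1 i) * (p * t.2.1 i + t.2.2.1 i) <
              p ^ (t.1 j) * (p * t.2.1 j + t.2.2.1 j)) ∧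
          (∀ i, p ^ (t.1 i) * (p * t.2.1 i + t.2.2.1 i) < N) then
        ∏ i, χ i ((p : ℚ_[p]) ^ (t.1 i) / (N : ℚ_[p])) * χ i ((t.2.2.1 i : ℚ_[p])) *
          ((t.2.2.1 i : ℚ_[p])) ^ (-(t.2.2.2 i : ℤ)) * (c i (t.2.2.2 i) : ℚ_[p]) *
          ((p * t.2.1 i : ℕ) : ℚ_[p]) ^ (t.2.2.2 i)
      else 0) ∘ e)
      = fun x : ((Fin d → ℕ) × (Fin d → ℕ) × (Fin d → ℕ)) × (Fin d → ℕ) =>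
        ∑ s ∈ A, if x.1 = s then myG p N d χ c s x.2 else 0 := by
    funext x
    simp only [Function.comp_apply]
    rw [Finset.sum_ite_eq A x.1 (fun s => myG p N d χ c s x.2)]
    by_cases hx : myP p N d x.1
    · rw [if_pos ((hmemA x.1).mpr hx)]
      exact if_pos hx
    · rw [if_neg (fun hc => hx ((hmemA x.1).mp hc))]
      exact if_neg hx
  rw [hFe]
  -- finally, reindex the finite sum by the chains
  have hbij : (∑ s ∈ A, ∏ i, χ i ((mynmap p d s i : ℚ_[p]) / (N : ℚ_[p])))
      = ∑ n ∈ chainsN d N, ∏ i, χ i ((n i : ℚ_[p]) / (N : ℚ_[p])) := by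
    refine Finset.sum_nbij' (i := fun s => mynmap p d s)
      (j := fun n => (fun i => ((n i).factorization p),
        fun i => ((n i) / p ^ ((n i).factorization p)) / p,
        fun i => ((n i) / p ^ ((n i).factorization p)) % p))
      ?_ ?_ ?_ ?_ ?_
    · intro s hs
      obtain ⟨h1, h2, h3, h4⟩ := (hmemA s).mp hs
      rw [chainsN, Finset.mem_filter]
      constructor
      · rw [Fintype.mem_piFinset]
        intro i
        rw [Finset.mem_Ioo]
        exact ⟨h2 i, h4 i⟩
      · exact h3
    · intro n hn
      rw [chainsN, Finset.mem_filter, Fintype.mem_piFinset] at hn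
      obtain ⟨hmem, hmono⟩ := hn
      have hpos : ∀ i, 0 < n i := fun i => (Finset.mem_Ioo.mp (hmem i)).1
      have hlt : ∀ i, n i < N := fun i => (Finset.mem_Ioo.mp (hmem i)).2
      rw [hmemA]
      refine ⟨fun i => ⟨(my_decomp_spec (hpos i)).1, (my_decomp_spec (hpos i)).2.1⟩,
        fun i => ?_, fun i j hij => ?_, fun i => ?_⟩
      · rw [(my_decomp_spec (hpos i)).2.2]
        exact hpos i
      · rw [(my_decomp_spec (hpos i)).2.2, (my_decomp_spec (hpos j)).2.2]
        exact hmono i j hij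
      · rw [(my_decomp_spec (hpos i)).2.2]
        exact hlt i
    · intro s hs
      obtain ⟨h1, h2, h3, h4⟩ := (hmemA s).mp hs
      have hd : ∀ i, mynmap p d s i = p ^ (s.1 i) * (p * s.2.1 i + s.2.2 i) := fun i => rfl
      have huni : ∀ i : Fin d,
          ((mynmap p d s i).factorization p = s.1 i) ∧
          ((mynmap p d s i) / p ^ ((mynmap p d s i).factorization p)) / p = s.2.1 i ∧
          ((mynmap p d s i) / p ^ ((mynmap p d s i).factorization p)) % p = s.2.2 i := by
        intro i
        have hpos : 0 < mynmap p d s i := h2 i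
        obtain ⟨a1, a2, a3⟩ := my_decomp_spec (p := p) hpos
        have := my_decomp_unique (p := p) a1 a2 (h1 i).1 (h1 i).2 (a3.trans (hd i))
        exact ⟨this.1, this.2.1, this.2.2⟩
      refine Prod.ext ?_ (Prod.ext ?_ ?_)
      · funext i; exact (huni i).1
      · funext i; exact (huni i).2.1
      · funext i; exact (huni i).2.2
    · intro n hn
      rw [chainsN, Finset.mem_filter, Fintype.mem_piFinset] at hn
      have hpos : ∀ i, 0 < n i := fun i => (Finset.mem_Ioo.mp (hn.1 i)).1
      funext i
      exact (my_decomp_spec (hpos i)).2.2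
    · intro s hs
      rfl
  rw [← hbij]
  exact hsum

theorem mhs_padic_expansion (p : ℕ) [Fact p.Prime] (d N : ℕ) (hd : 1 ≤ d) (hN : 2 ≤ N)
    (χ : Fin d → ℚ_[p] → ℚ_[p]) (c : Fin d → ℕ → ℤ_[p])
    (hmul : ∀ i : Fin d, ∀ x y : ℚ_[p], x ≠ 0 → y ≠ 0 → χ i (x * y) = χ i x * χ i y)
    (hne : ∀ i : Fin d, ∀ x : ℚ_[p], x ≠ 0 → χ i x ≠ 0)
    (htaylor : ∀ i : Fin d, ∀ x : ℚ_[p], ‖x‖ ≤ (p : ℝ)⁻¹ →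
      HasSum (fun l : ℕ => (c i l : ℚ_[p]) * x ^ l) (χ i (1 + x))) :
    Summable (fun t : (Fin d → ℕ) × (Fin d → ℕ) × (Fin d → ℕ) × (Fin d → ℕ) =>
        if (∀ i, 1 ≤ t.2.2.1 i ∧ t.2.2.1 i ≤ p - 1) ∧
            (∀ i, 0 < p ^ (t.1 i) * (p * t.2.1 i + t.2.2.1 i)) ∧
            (∀ i j : Fin d, i < j →
              p ^ (t.1 i) * (p * t.2.1 i + t.2.2.1 i) <
                p ^ (t.1 j) * (p * t.2.1 j + t.2.2.1 j)) ∧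
            (∀ i, p ^ (t.1 i) * (p * t.2.1 i + t.2.2.1 i) < N) then
          ∏ i, χ i ((p : ℚ_[p]) ^ (t.1 i) / (N : ℚ_[p])) * χ i ((t.2.2.1 i : ℚ_[p])) *
            ((t.2.2.1 i : ℚ_[p])) ^ (-(t.2.2.2 i : ℤ)) * (c i (t.2.2.2 i) : ℚ_[p]) *
            ((p * t.2.1 i : ℕ) : ℚ_[p]) ^ (t.2.2.2 i)
        else 0) ∧
    (∑ n ∈ chainsN d N, ∏ i, χ i ((n i : ℚ_[p]) / (N : ℚ_[p])))
      = ∑' t : (Fin d → ℕ) × (Fin d → ℕ) × (Fin d → ℕ) × (Fin d → ℕ),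
          if (∀ i, 1 ≤ t.2.2.1 i ∧ t.2.2.1 i ≤ p - 1) ∧
              (∀ i, 0 < p ^ (t.1 i) * (p * t.2.1 i + t.2.2.1 i)) ∧
              (∀ i j : Fin d, i < j →
                p ^ (t.1 i) * (p * t.2.1 i + t.2.2.1 i) <
                  p ^ (t.1 j) * (p * t.2.1 j + t.2.2.1 j)) ∧
              (∀ i, p ^ (t.1 i) * (p * t.2.1 i + t.2.2.1 i) < N) then
            ∏ i, χ i ((p : ℚ_[p]) ^ (t.1 i) / (N : ℚ_[p])) * χ i ((t.2.2.1 i : ℚ_[p])) *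
              ((t.2.2.1 i : ℚ_[p])) ^ (-(t.2.2.2 i : ℤ)) * (c i (t.2.2.2 i) : ℚ_[p]) *
              ((p * t.2.1 i : ℕ) : ℚ_[p]) ^ (t.2.2.2 i)
          else 0 := by
  have h := my_core p d N hN χ c hmul htaylor
  exact ⟨h.summable, h.tsum_eq.symm⟩
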